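/- In a non-compact Polish group G, for any countable family {C_n} of nowhere dense subsets of G there exist a countable set Q ⊆ G and a closed nowhere dense set C ⊆ G such that ∪_n C_n ⊆ Q·C. -/

import Mathlib

open Set Topology Pointwise Filter

section Aux

variable {G : Type*} [Group G] [TopologicalSpace G] [IsTopologicalGroup G]

private lemma nwd_smul (a : G) {s : Set G} (h : IsNowhereDense s) :
    IsNowhereDense (a • s) := by
  unfold IsNowhereDense at *
  rw [closure_smul, interior_smul, h, Set.smul_set_empty]

private lemma construction [PolishSpace G]
    (V : Set G) (hV : V ∈ 𝓝 1) (x : ℕ → G) (hx : ∀ j k, j ≠ k → x j ∉ x k • V)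
    (C : ℕ → Set G) (hC : ∀ n, IsNowhereDense (C n)) :
    ∃ (Q D : Set G), Q.Countable ∧ IsClosed D ∧ IsNowhereDense D ∧ (⋃ n, C n) ⊆ Q * D := by
  classical
  obtain ⟨M, hM, _, hMsymm, hMV⟩ := exists_closed_nhds_one_inv_eq_mul_subset hV
  obtain ⟨K, hK, hKclosed, hKsymm, hKM⟩ := exists_closed_nhds_one_inv_eq_mul_subset hM
  have hK4 : K * K * (K * K) ⊆ V := fun z hz => hMV (mul_subset_mul hKM hKM hz)
  have hKinv : ∀ {a : G}, a ∈ K → a⁻¹ ∈ K := by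
    intro a ha
    rw [← hKsymm]
    exact Set.inv_mem_inv.2 ha
  have h1intK : (1 : G) ∈ interior K := mem_interior_iff_mem_nhds.2 hK
  have : Nonempty G := ⟨1⟩
  set q : ℕ → G := TopologicalSpace.denseSeq G with hq
  have hqd : DenseRange q := TopologicalSpace.denseRange_denseSeq G
  set e : ℕ × ℕ → ℕ := fun p => Denumerable.eqv (ℕ × ℕ) p with he'
  have he : Function.Injective e := (Denumerable.eqv (ℕ × ℕ)).injective
  set g : ℕ × ℕ → G := fun p => x (e p) with hg'
  have hg : ∀ p p', p ≠ p' → g p ∉ g p' • V := fun p p' hne =>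
    hx _ _ (fun hEq => hne (he hEq))
  set P : ℕ × ℕ → Set G := fun p => closure (C p.1) ∩ (q p.2 • K) with hP'
  set t : ℕ × ℕ → G := fun p => g p * (q p.2)⁻¹ with ht'
  set T : ℕ × ℕ → Set G := fun p => t p • P p with hT'
  have hPclosed : ∀ p, IsClosed (P p) := fun p => isClosed_closure.inter (hKclosed.smul _)
  have hTclosed : ∀ p, IsClosed (T p) := fun p => (hPclosed p).smul _
  have hTsub : ∀ p, T p ⊆ g p • K := by
    rintro p y ⟨z, hz, rfl⟩
    obtain ⟨k, hk, rfl⟩ := hz.2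
    refine ⟨k, hk, ?_⟩
    simp only [smul_eq_mul, ht']
    group
  have hPnwd : ∀ p, IsNowhereDense (P p) := by
    intro p
    have h1 : closure (P p) ⊆ closure (C p.1) := by
      have := closure_mono (Set.inter_subset_left : P p ⊆ closure (C p.1))
      rwa [closure_closure] at this
    have h2 : interior (closure (P p)) ⊆ interior (closure (C p.1)) := interior_mono h1
    rw [hC p.1] at h2
    exact Set.subset_empty_iff.1 h2
  have hTnwd : ∀ p, IsNowhereDense (T p) := fun p => nwd_smul _ (hPnwd p)
  -- key separation
  have key : ∀ z : G, ∀ p p', ((z • interior K) ∩ T p).Nonempty →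
      ((z • interior K) ∩ T p').Nonempty → p = p' := by
    rintro z p p' ⟨a, haz, haT⟩ ⟨b, hbz, hbT⟩
    by_contra hne
    obtain ⟨k₁', hk₁', hk₁z⟩ := haz
    obtain ⟨k₁, hk₁, hk₁T⟩ := hTsub p haT
    obtain ⟨k₂', hk₂', hk₂z⟩ := hbz
    obtain ⟨k₂, hk₂, hk₂T⟩ := hTsub p' hbT
    simp only [smul_eq_mul] at hk₁z hk₁T hk₂z hk₂T
    apply hg p p' hne
    have e1 : g p * k₁ = z * k₁' := hk₁T.trans hk₁z.symm
    have e2 : g p' * k₂ = z * k₂' := hk₂T.trans hk₂z.symm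
    refine ⟨(k₂ * k₂'⁻¹) * (k₁' * k₁⁻¹), ?_, ?_⟩
    · exact hK4 (Set.mul_mem_mul (Set.mul_mem_mul hk₂ (hKinv (interior_subset hk₂')))
        (Set.mul_mem_mul (interior_subset hk₁') (hKinv hk₁)))
    · have h1 : g p = (z * k₁') * k₁⁻¹ := by rw [← e1, mul_inv_cancel_right]
      have h2 : g p' * k₂ * k₂'⁻¹ = z := by rw [e2, mul_inv_cancel_right]
      simp only [smul_eq_mul]
      rw [h1, ← h2]
      group
  set D : Set G := ⋃ p, T p with hD'
  have hzmem : ∀ z : G, z ∈ z • interior K := fun z => ⟨1, h1intK, by simp⟩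
  have hDclosed : IsClosed D := by
    rw [← isOpen_compl_iff, isOpen_iff_mem_nhds]
    intro z hz
    by_cases hJ : ∃ p, ((z • interior K) ∩ T p).Nonempty
    · obtain ⟨p₀, hp₀⟩ := hJ
      have hzT : z ∉ T p₀ := fun hmem => hz (Set.mem_iUnion.2 ⟨p₀, hmem⟩)
      have hopen : IsOpen ((z • interior K) ∩ (T p₀)ᶜ) :=
        (isOpen_interior.smul z).inter (hTclosed p₀).isOpen_compl
      refine Filter.mem_of_superset (hopen.mem_nhds ⟨hzmem z, hzT⟩) ?_
      rintro y ⟨hy1, hy2⟩ hyD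
      obtain ⟨p, hp⟩ := Set.mem_iUnion.1 hyD
      exact hy2 (key z p p₀ ⟨y, hy1, hp⟩ hp₀ ▸ hp)
    · refine Filter.mem_of_superset ((isOpen_interior.smul z).mem_nhds (hzmem z)) ?_
      intro y hy hyD
      obtain ⟨p, hp⟩ := Set.mem_iUnion.1 hyD
      exact hJ ⟨p, y, hy, hp⟩
  have hDint : interior D = ∅ := by
    by_contra h
    obtain ⟨z, hz⟩ := Set.nonempty_iff_ne_empty.2 h
    have hzD : z ∈ D := interior_subset hz
    obtain ⟨p₀, hp₀⟩ := Set.mem_iUnion.1 hzD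
    have hO : IsOpen (interior D ∩ z • interior K) :=
      isOpen_interior.inter (isOpen_interior.smul z)
    have hne : (interior D ∩ z • interior K).Nonempty := ⟨z, hz, hzmem z⟩
    have hsub : interior D ∩ z • interior K ⊆ T p₀ := by
      rintro y ⟨hy1, hy2⟩
      obtain ⟨p, hp⟩ := Set.mem_iUnion.1 (interior_subset hy1)
      exact key z p p₀ ⟨y, hy2, hp⟩ ⟨z, hzmem z, hp₀⟩ ▸ hp
    have hsub2 : interior D ∩ z • interior K ⊆ interior (closure (T p₀)) :=
      interior_maximal (hsub.trans subset_closure) hO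
    rw [hTnwd p₀] at hsub2
    exact (hne.mono hsub2).ne_empty rfl
  refine ⟨Set.range (fun p => (t p)⁻¹), D, Set.countable_range _, hDclosed, ?_, ?_⟩
  · unfold IsNowhereDense
    rw [hDclosed.closure_eq]
    exact hDint
  · rintro y hy
    obtain ⟨n, hyn⟩ := Set.mem_iUnion.1 hy
    obtain ⟨m, hm⟩ : ∃ m, q m ∈ y • interior K := by
      obtain ⟨m, hm⟩ := hqd.exists_mem_open (isOpen_interior.smul y) ⟨y, hzmem y⟩
      exact ⟨m, hm⟩
    have hyqK : y ∈ q m • K := by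
      obtain ⟨w, hw, hww⟩ := hm
      simp only [smul_eq_mul] at hww
      refine ⟨w⁻¹, hKinv (interior_subset hw), ?_⟩
      simp only [smul_eq_mul]
      rw [← hww]
      group
    have hyP : y ∈ P (n, m) := ⟨subset_closure hyn, hyqK⟩
    refine ⟨(t (n, m))⁻¹, ⟨(n, m), rfl⟩, t (n, m) * y, ?_, by group⟩
    exact Set.mem_iUnion.2 ⟨(n, m), ⟨y, hyP, rfl⟩⟩


private lemma two_sided_cauchy_tendsto [PolishSpace G] (y : ℕ → G)
    (hL : ∀ U ∈ 𝓝 (1:G), ∃ N, ∀ i, N ≤ i → ∀ j, N ≤ j → (y i)⁻¹ * y j ∈ U)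
    (hR : ∀ U ∈ 𝓝 (1:G), ∃ N, ∀ i, N ≤ i → ∀ j, N ≤ j → y j * (y i)⁻¹ ∈ U) :
    ∃ z, Filter.Tendsto y Filter.atTop (𝓝 z) := by
  classical
  letI := TopologicalSpace.upgradeIsCompletelyMetrizable G
  have hne : Nonempty G := ⟨1⟩
  obtain ⟨Vb, hVb⟩ := (𝓝 (1:G)).exists_antitone_basis
  set V : ℕ → Set G := fun m => interior (Vb m) with hV'
  have hVnhds : ∀ m, V m ∈ 𝓝 (1:G) := fun m => interior_mem_nhds.2 (hVb.mem m)
  have hVbasis : ∀ U ∈ 𝓝 (1:G), ∃ m, V m ⊆ U := by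
    intro U hU
    obtain ⟨m, -, h⟩ := hVb.1.mem_iff.1 hU
    exact ⟨m, interior_subset.trans h⟩
  -- the sets S m δ
  set S : ℕ → ℝ → Set G := fun m δ => {z | ∀ v ∈ V m, ∀ w ∈ V m, dist (v * z) (w * z) ≤ δ}
    with hS'
  have hSclosed : ∀ m δ, IsClosed (S m δ) := by
    intro m δ
    have : S m δ = ⋂ v ∈ V m, ⋂ w ∈ V m, {z | dist (v * z) (w * z) ≤ δ} := by
      ext z; simp [hS']
    rw [this]
    refine isClosed_biInter fun v _ => isClosed_biInter fun w _ => ?_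
    exact isClosed_le (Continuous.dist (continuous_const.mul continuous_id)
      (continuous_const.mul continuous_id)) continuous_const
  have hScover : ∀ δ : ℝ, 0 < δ → ∀ z : G, ∃ m, z ∈ S m δ := by
    intro δ hδ z
    have hcont : Continuous fun v : G => v * z := continuous_mul_right z
    have hmem : (fun v : G => v * z) ⁻¹' Metric.ball z (δ / 2) ∈ 𝓝 (1:G) := by
      apply hcont.continuousAt.preimage_mem_nhds
      simpa using Metric.ball_mem_nhds z (by linarith)
    obtain ⟨m, hm⟩ := hVbasis _ hmem
    refine ⟨m, fun v hv w hw => ?_⟩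
    have h1 : dist (v * z) z < δ / 2 := hm hv
    have h2 : dist (w * z) z < δ / 2 := hm hw
    calc dist (v * z) (w * z) ≤ dist (v * z) z + dist z (w * z) := dist_triangle _ _ _
      _ = dist (v * z) z + dist (w * z) z := by rw [dist_comm z]
      _ ≤ δ := by linarith
  -- thresholds
  have hNR : ∀ m, ∃ N, ∀ i, N ≤ i → ∀ j, N ≤ j → y j * (y i)⁻¹ ∈ V m :=
    fun m => hR (V m) (hVnhds m)
  have hNL : ∀ m, ∃ N, ∀ i, N ≤ i → ∀ j, N ≤ j → (y i)⁻¹ * y j ∈ V m :=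
    fun m => hL (V m) (hVnhds m)
  set NR : ℕ → ℕ := fun m => (hNR m).choose with hNR'
  set NL : ℕ → ℕ := fun m => (hNL m).choose with hNL'
  -- the open sets U δ
  set U : ℝ → Set G := fun δ => ⋃ m, ⋃ i, ⋃ (_ : NR m ≤ i), (y i)⁻¹ • interior (S m δ)
    with hU'
  have hUopen : ∀ δ, IsOpen (U δ) :=
    fun δ => isOpen_iUnion fun m => isOpen_iUnion fun i => isOpen_iUnion fun _ =>
      isOpen_interior.smul _
  have hUprop : ∀ δ x, x ∈ U δ → ∃ N, ∀ i, N ≤ i → ∀ j, N ≤ j →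
      dist (y i * x) (y j * x) ≤ δ := by
    intro δ x hx
    simp only [hU', Set.mem_iUnion] at hx
    obtain ⟨m, i, hi, hx⟩ := hx
    rw [Set.mem_inv_smul_set_iff] at hx
    have hyx : y i • x ∈ S m δ := interior_subset hx
    refine ⟨i, fun j hj l hl => ?_⟩
    have h1 : y j * (y i)⁻¹ ∈ V m := (hNR m).choose_spec i hi j (le_trans hi hj)
    have h2 : y l * (y i)⁻¹ ∈ V m := (hNR m).choose_spec i hi l (le_trans hi hl)
    have := hyx _ h1 _ h2
    simp only [smul_eq_mul] at this ⊢
    simpa only [mul_assoc, inv_mul_cancel_left] using this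
  have hUdense : ∀ δ : ℝ, 0 < δ → Dense (U δ) := by
    intro δ hδ
    rw [dense_iff_inter_open]
    rintro Ω hΩopen ⟨ω, hω⟩
    have hcont : Continuous fun p : G × G => p.1 * (p.2 * ω) := by fun_prop
    have hmem : (fun p : G × G => p.1 * (p.2 * ω)) ⁻¹' Ω ∈ 𝓝 ((1:G), (1:G)) := by
      apply hcont.continuousAt.preimage_mem_nhds
      simpa using hΩopen.mem_nhds hω
    rw [nhds_prod_eq, Filter.mem_prod_iff] at hmem
    obtain ⟨U₁, hU₁, U₂, hU₂, hU12⟩ := hmem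
    obtain ⟨m₁, hm₁⟩ := hVbasis (U₁ ∩ U₂) (Filter.inter_mem hU₁ hU₂)
    have hO1 : IsOpen (V m₁ * {ω}) := isOpen_interior.mul_right
    have hOopen : IsOpen (y (NL m₁) • (V m₁ * {ω})) := hO1.smul _
    have h1m : (1:G) ∈ V m₁ := mem_of_mem_nhds (hVnhds m₁)
    have hOne : (y (NL m₁) • (V m₁ * {ω})).Nonempty :=
      ⟨y (NL m₁) • (1 * ω), ⟨1 * ω, Set.mul_mem_mul h1m rfl, rfl⟩⟩
    have hRdense : Dense (⋃ m, interior (S m δ)) := by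
      apply dense_iUnion_interior_of_closed (fun m => hSclosed m δ)
      ext z
      simp only [Set.mem_iUnion, Set.mem_univ, iff_true]
      exact hScover δ hδ z
    obtain ⟨p, hpO, hpR⟩ :=
      hRdense.inter_open_nonempty _ hOopen hOne
    obtain ⟨m₂, hpm⟩ := Set.mem_iUnion.1 hpR
    obtain ⟨c, hc, hcp⟩ := hpO
    obtain ⟨v, hv, w, hw, rfl⟩ := hc
    rw [Set.mem_singleton_iff] at hw
    rw [hw] at hcp
    set i := max (NL m₁) (NR m₂) with hi'
    set x := (y i)⁻¹ * p with hx'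
    have hxU : x ∈ U δ := by
      simp only [hU', Set.mem_iUnion]
      refine ⟨m₂, i, le_max_right _ _, ?_⟩
      rw [Set.mem_inv_smul_set_iff]
      have : y i • x = p := by simp [hx', smul_eq_mul]
      rwa [this]
    have hxΩ : x ∈ Ω := by
      have ha : (y i)⁻¹ * y (NL m₁) ∈ V m₁ :=
        (hNL m₁).choose_spec i (le_max_left _ _) (NL m₁) le_rfl
      have := hU12 (Set.mk_mem_prod (hm₁ ha).1 (hm₁ hv).2)
      have hxeq : x = ((y i)⁻¹ * y (NL m₁)) * (v * ω) := by
        rw [hx', ← hcp]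
        simp only [smul_eq_mul]
        group
      rwa [hxeq]
    exact ⟨x, hxΩ, hxU⟩
  have hdense : Dense (⋂ k : ℕ, U (1 / ((k : ℝ) + 1))) :=
    dense_iInter_of_isOpen (fun k => hUopen _) (fun k => hUdense _ (by positivity))
  obtain ⟨x₀, hx₀⟩ := hdense.nonempty
  rw [Set.mem_iInter] at hx₀
  have hcauchy : CauchySeq (fun i => y i * x₀) := by
    rw [Metric.cauchySeq_iff]
    intro ε hε
    obtain ⟨k, hk⟩ := exists_nat_one_div_lt hε
    obtain ⟨N, hN⟩ := hUprop _ _ (hx₀ k)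
    exact ⟨N, fun a ha b hb => lt_of_le_of_lt (hN a ha b hb) hk⟩
  obtain ⟨z, hz⟩ := cauchySeq_tendsto_of_complete hcauchy
  refine ⟨z * x₀⁻¹, ?_⟩
  have h2 := hz.mul (tendsto_const_nhds (x := x₀⁻¹))
  simpa only [mul_inv_cancel_right] using h2


private lemma pigeon
    (h : ∀ V ∈ 𝓝 (1:G), ∀ x : ℕ → G, ∃ j k, j ≠ k ∧ x j ∈ x k • V)
    {V : Set G} (hV : V ∈ 𝓝 1) (u : ℕ → G) (S : Set ℕ) (hS : S.Infinite) :
    ∃ a : G, {s ∈ S | u s ∈ a • V}.Infinite := by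
  classical
  set V' := V ∩ V⁻¹ with hV'
  have hV'V : V' ⊆ V := Set.inter_subset_left
  have hV'nhds : V' ∈ 𝓝 (1:G) := Filter.inter_mem hV (inv_mem_nhds_one G hV)
  have h1V' : (1:G) ∈ V' := mem_of_mem_nhds hV'nhds
  have hV'symm : ∀ {a b : G}, a ∈ b • V' → b ∈ a • V' := by
    rintro a b ⟨v, hv, rfl⟩
    refine ⟨v⁻¹, ⟨Set.mem_inv.1 hv.2, ?_⟩, ?_⟩
    · rw [Set.mem_inv, inv_inv]; exact hv.1
    · simp [smul_eq_mul, mul_assoc]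
  by_contra hcon
  push_neg at hcon
  set 𝒮 : Set (Set G) := {T | T ⊆ u '' S ∧ ∀ a ∈ T, ∀ b ∈ T, a ≠ b → a ∉ b • V'} with h𝒮
  have hzorn : ∀ c ⊆ 𝒮, IsChain (· ⊆ ·) c → c.Nonempty → ∃ ub ∈ 𝒮, ∀ s ∈ c, s ⊆ ub := by
    intro c hc hchain hcne
    refine ⟨⋃₀ c, ⟨Set.sUnion_subset fun t ht => (hc ht).1, ?_⟩,
      fun s hs => Set.subset_sUnion_of_mem hs⟩
    rintro a ⟨ta, hta, haa⟩ b ⟨tb, htb, hbb⟩ hne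
    rcases hchain.total hta htb with hsub | hsub
    · exact (hc htb).2 a (hsub haa) b hbb hne
    · exact (hc hta).2 a haa b (hsub hbb) hne
  obtain ⟨T, -, hTmax⟩ := zorn_subset_nonempty 𝒮 hzorn ∅ ⟨Set.empty_subset _, by simp⟩
  have hTfin : T.Finite := by
    rw [← Set.not_infinite]
    intro hTinf
    set f := hTinf.natEmbedding with hf
    obtain ⟨j, k, hjk, hmem⟩ := h V' hV'nhds (fun n => (f n : G))
    have hne : (f j : G) ≠ (f k : G) := fun hEq => hjk (f.injective (Subtype.ext hEq))
    exact hTmax.prop.2 _ (f j).2 _ (f k).2 hne hmem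
  have hcover : ∀ s ∈ S, ∃ b ∈ T, u s ∈ b • V' := by
    intro s hs
    by_contra hnc
    push_neg at hnc
    have husT : u s ∉ T := fun hmem => hnc _ hmem ⟨1, h1V', mul_one _⟩
    have hins : insert (u s) T ∈ 𝒮 := by
      refine ⟨Set.insert_subset ⟨s, hs, rfl⟩ hTmax.prop.1, ?_⟩
      rintro a ha b hb hne
      rcases ha with rfl | ha
      · rcases hb with rfl | hb
        · exact absurd rfl hne
        · exact hnc b hb
      · rcases hb with rfl | hb
        · exact fun hmem => hnc a ha (hV'symm hmem)
        · exact hTmax.prop.2 a ha b hb hne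
    exact husT (hTmax.2 hins (Set.subset_insert _ _) (Set.mem_insert _ _))
  have hsubU : S ⊆ ⋃ b ∈ T, {s ∈ S | u s ∈ b • V'} := by
    intro s hs
    obtain ⟨b, hb, hm⟩ := hcover s hs
    exact Set.mem_biUnion hb ⟨hs, hm⟩
  have hex : ∃ b ∈ T, {s ∈ S | u s ∈ b • V'}.Infinite := by
    by_contra hall
    push_neg at hall
    exact hS ((hTfin.biUnion hall).subset hsubU)
  obtain ⟨b, -, hbinf⟩ := hex
  exact (hbinf.mono (t := {s ∈ S | u s ∈ b • V}) fun s hs => ⟨hs.1, Set.smul_set_mono hV'V hs.2⟩) (hcon b)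

private lemma diagonal [FirstCountableTopology G]
    (h : ∀ V ∈ 𝓝 (1:G), ∀ x : ℕ → G, ∃ j k, j ≠ k ∧ x j ∈ x k • V)
    (u : ℕ → G) :
    ∃ φ : ℕ → ℕ, StrictMono φ ∧
      ∀ U ∈ 𝓝 (1:G), ∃ N, ∀ i, N ≤ i → ∀ j, N ≤ j →
        (u (φ i))⁻¹ * u (φ j) ∈ U ∧ u (φ j) * (u (φ i))⁻¹ ∈ U := by
  classical
  obtain ⟨Vb, hVb⟩ := (𝓝 (1:G)).exists_antitone_basis
  have step : ∀ (m : ℕ) (S : Set ℕ), S.Infinite → ∃ S' : Set ℕ, S' ⊆ S ∧ S'.Infinite ∧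
      (∃ a : G, ∀ s ∈ S', u s ∈ a • Vb m) ∧ (∃ b : G, ∀ s ∈ S', (u s)⁻¹ ∈ b • Vb m) := by
    intro m S hS
    obtain ⟨a, ha⟩ := pigeon h (hVb.mem m) u S hS
    obtain ⟨b, hb⟩ := pigeon h (hVb.mem m) (fun n => (u n)⁻¹) _ ha
    refine ⟨{s | (s ∈ S ∧ u s ∈ a • Vb m) ∧ (u s)⁻¹ ∈ b • Vb m},
      fun s hs => hs.1.1, ?_, ⟨a, fun s hs => hs.1.2⟩, ⟨b, fun s hs => hs.2⟩⟩
    exact hb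
  let F : ℕ → {S : Set ℕ // S.Infinite} → {S : Set ℕ // S.Infinite} := fun m S =>
    ⟨(step m S.1 S.2).choose, (step m S.1 S.2).choose_spec.2.1⟩
  let T : ℕ → {S : Set ℕ // S.Infinite} := fun m =>
    Nat.rec (F 0 ⟨Set.univ, Set.infinite_univ⟩) (fun m prev => F (m + 1) prev) m
  have hTspec : ∀ m, (∃ a : G, ∀ s ∈ (T m).1, u s ∈ a • Vb m) ∧
      (∃ b : G, ∀ s ∈ (T m).1, (u s)⁻¹ ∈ b • Vb m) := by
    intro m
    cases m with
    | zero => exact ⟨(step 0 Set.univ Set.infinite_univ).choose_spec.2.2.1,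
        (step 0 Set.univ Set.infinite_univ).choose_spec.2.2.2⟩
    | succ m => exact ⟨(step (m + 1) (T m).1 (T m).2).choose_spec.2.2.1,
        (step (m + 1) (T m).1 (T m).2).choose_spec.2.2.2⟩
  have hTsub : ∀ m, (T (m + 1)).1 ⊆ (T m).1 :=
    fun m => (step (m + 1) (T m).1 (T m).2).choose_spec.1
  have hTmono : ∀ m m', m ≤ m' → (T m').1 ⊆ (T m).1 := by
    intro m m' hle
    induction hle with
    | refl => exact subset_rfl
    | step _ ih => exact Set.Subset.trans (hTsub _) ih
  let φ : ℕ → ℕ := fun m => Nat.rec ((T 0).2.exists_gt 0).choose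
      (fun m prev => ((T (m + 1)).2.exists_gt prev).choose) m
  have hφmem : ∀ m, φ m ∈ (T m).1 := by
    intro m
    cases m with
    | zero => exact ((T 0).2.exists_gt 0).choose_spec.1
    | succ m => exact ((T (m + 1)).2.exists_gt (φ m)).choose_spec.1
  have hφlt : ∀ m, φ m < φ (m + 1) :=
    fun m => ((T (m + 1)).2.exists_gt (φ m)).choose_spec.2
  refine ⟨φ, strictMono_nat_of_lt_succ hφlt, ?_⟩
  intro U hU
  obtain ⟨W, hWopen, hW1, hWU⟩ := exists_open_nhds_one_mul_subset hU
  have hWnhds : W ∈ 𝓝 (1:G) := hWopen.mem_nhds hW1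
  have hW' : W ∩ W⁻¹ ∈ 𝓝 (1:G) := Filter.inter_mem hWnhds (inv_mem_nhds_one G hWnhds)
  obtain ⟨m, -, hm⟩ := hVb.1.mem_iff.1 hW'
  refine ⟨m, fun i hi j hj => ?_⟩
  obtain ⟨⟨a, ha⟩, ⟨b, hb⟩⟩ := hTspec m
  have hmi : φ i ∈ (T m).1 := hTmono m i hi (hφmem i)
  have hmj : φ j ∈ (T m).1 := hTmono m j hj (hφmem j)
  constructor
  · obtain ⟨vi, hvi, hvi'⟩ := ha _ hmi
    obtain ⟨vj, hvj, hvj'⟩ := ha _ hmj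
    simp only [smul_eq_mul] at hvi' hvj'
    have heq : (u (φ i))⁻¹ * u (φ j) = vi⁻¹ * vj := by
      rw [← hvi', ← hvj']; group
    rw [heq]
    refine hWU (Set.mul_mem_mul ?_ (hm hvj).1)
    exact Set.mem_inv.1 ((hm hvi).2)
  · obtain ⟨wi, hwi, hwi'⟩ := hb _ hmi
    obtain ⟨wj, hwj, hwj'⟩ := hb _ hmj
    simp only [smul_eq_mul] at hwi' hwj'
    have heq : u (φ j) * (u (φ i))⁻¹ = wj⁻¹ * wi := by
      have h1 : u (φ j) = (b * wj)⁻¹ := by rw [hwj']; group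
      rw [h1, ← hwi']; group
    rw [heq]
    refine hWU (Set.mul_mem_mul ?_ (hm hwi).1)
    exact Set.mem_inv.1 ((hm hwj).2)

private lemma exists_separated [PolishSpace G] (hnc : ¬ CompactSpace G) :
    ∃ V ∈ 𝓝 (1:G), ∃ x : ℕ → G, ∀ j k, j ≠ k → x j ∉ x k • V := by
  by_contra hcon
  push_neg at hcon
  apply hnc
  letI := TopologicalSpace.upgradeIsCompletelyMetrizable G
  rw [compactSpace_iff_seqCompactSpace]
  refine ⟨fun x _ => ?_⟩
  obtain ⟨φ, hφ, hc⟩ := diagonal hcon x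
  obtain ⟨z, hz⟩ := two_sided_cauchy_tendsto (x ∘ φ)
    (fun U hU => by
      obtain ⟨N, hN⟩ := hc U hU
      exact ⟨N, fun i hi j hj => (hN i hi j hj).1⟩)
    (fun U hU => by
      obtain ⟨N, hN⟩ := hc U hU
      exact ⟨N, fun i hi j hj => (hN i hi j hj).2⟩)
  exact ⟨z, Set.mem_univ _, φ, hφ, hz⟩

end Aux

/-- in a non-compact Polish group, any countable family of nowhere dense
sets is covered by countably many translates of a single closed nowhere dense set. -/
theorem countable_nwd_covered_by_translates
    {G : Type*} [Group G] [TopologicalSpace G] [IsTopologicalGroup G] [PolishSpace G]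
    (hnc : ¬ CompactSpace G)
    (C : ℕ → Set G) (hC : ∀ n, IsNowhereDense (C n)) :
    ∃ (Q D : Set G), Q.Countable ∧ IsClosed D ∧ IsNowhereDense D ∧
      (⋃ n, C n) ⊆ Q * D := by
  obtain ⟨V, hV, x, hx⟩ := exists_separated hnc
  exact construction V hV x hx C hC
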